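/- Let V_t ∈ ℝ^{(n+d)×(n+d)} be symmetric positive definite, β_t > 0, and H* ∈ ℝ^{(n+d)×n} have full column rank. Define F_t = β_t² H*ᵀ V_t⁻¹ H*. Then for any Θ̂, Θ* ∈ ℝ^{(n+d)×n}: if tr((Θ̂ - Θ*)ᵀ β_t⁻² V_t (Θ̂ - Θ*)) ≤ 1 then tr((H*ᵀΘ̂ - H*ᵀΘ*)ᵀ F_t⁻¹ (H*ᵀΘ̂ - H*ᵀΘ*)) ≤ 1. Equivalently, the RLS confidence ellipsoid is contained in the closed-loop confidence ellipsoid. -/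

import Mathlib

open Matrix

lemma my_trace_nonneg {m : Type*} [Fintype m] [DecidableEq m]
    {M : Matrix m m ℝ} (hM : M.PosSemidef) : 0 ≤ M.trace := by
  rw [Matrix.trace]
  apply Finset.sum_nonneg
  intro i _
  have := hM.dotProduct_mulVec_nonneg (Pi.single i 1)
  simpa [Matrix.mulVec_single, dotProduct, Pi.single_apply] using this

lemma my_mulVec_inj {n d : ℕ} (H : Matrix (Fin (n + d)) (Fin n) ℝ) (hH : H.rank = n) :
    Function.Injective H.mulVec := by
  rw [← Matrix.coe_mulVecLin]
  rw [← LinearMap.ker_eq_bot]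
  have h1 := LinearMap.finrank_range_add_finrank_ker H.mulVecLin
  rw [Matrix.rank] at hH
  rw [hH] at h1
  simp only [Module.finrank_pi, Fintype.card_fin] at h1
  have h2 : Module.finrank ℝ (LinearMap.ker H.mulVecLin) = 0 := by omega
  exact Submodule.finrank_eq_zero.mp h2


/-- the RLS confidence ellipsoid is contained in the closed-loop confidence
ellipsoid.  With `F = β² Hᵀ V⁻¹ H`, if `tr((Θ̂-Θ*)ᵀ β⁻² V (Θ̂-Θ*)) ≤ 1` then
`tr((HᵀΘ̂ - HᵀΘ*)ᵀ F⁻¹ (HᵀΘ̂ - HᵀΘ*)) ≤ 1`. -/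
theorem rls_subset_closedLoop {n d : ℕ}
    (V : Matrix (Fin (n + d)) (Fin (n + d)) ℝ) (hV : V.PosDef)
    (β : ℝ) (hβ : 0 < β)
    (H : Matrix (Fin (n + d)) (Fin n) ℝ) (hH : H.rank = n)
    (Θhat Θstar : Matrix (Fin (n + d)) (Fin n) ℝ)
    (hRLS : ((Θhat - Θstar)ᵀ * ((β ^ 2)⁻¹ • V) * (Θhat - Θstar)).trace ≤ 1) :
    ((Hᵀ * Θhat - Hᵀ * Θstar)ᵀ * (β ^ 2 • (Hᵀ * V⁻¹ * H))⁻¹ *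
        (Hᵀ * Θhat - Hᵀ * Θstar)).trace ≤ 1 := by

  set Δ := Θhat - Θstar with hΔ
  have hHT : Hᵀ * Θhat - Hᵀ * Θstar = Hᵀ * Δ := by rw [hΔ, Matrix.mul_sub]
  have hVinv : V⁻¹.PosDef := hV.inv
  have hinj := my_mulVec_inj H hH
  set G := Hᵀ * V⁻¹ * H with hG_def
  have hGH : G = Hᴴ * V⁻¹ * H := by
    rw [hG_def, Matrix.conjTranspose_eq_transpose_of_trivial]
  have hG : G.PosDef := by
    refine Matrix.PosDef.of_dotProduct_mulVec_pos ?_ ?_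
    · rw [hGH]; exact Matrix.isHermitian_conjTranspose_mul_mul H hVinv.1
    · intro x hx
      have hx' : H *ᵥ x ≠ 0 := by
        intro h
        exact hx (hinj (by simpa using h))
      have := hVinv.dotProduct_mulVec_pos hx'
      rw [hGH]
      simpa only [star_mulVec, dotProduct_mulVec, vecMul_vecMul] using this
  haveI : Invertible G := hG.isUnit.invertible
  haveI : Invertible V := hV.isUnit.invertible
  -- block matrix PSD
  have hblock : (Matrix.fromBlocks V H Hᴴ G).PosSemidef := by
    rw [Matrix.PosDef.fromBlocks₁₁ H G hV]
    rw [hGH]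
    simp [Matrix.PosSemidef.zero]
  have hKey : (V - H * G⁻¹ * Hᴴ).PosSemidef :=
    (Matrix.PosDef.fromBlocks₂₂ V H hG).mp hblock
  -- tr(Δᵀ (V - H G⁻¹ Hᵀ) Δ) ≥ 0
  have hTr : 0 ≤ ((Δᵀ * ((V - H * G⁻¹ * Hᴴ) * Δ)).trace) := by
    have := hKey.conjTranspose_mul_mul_same Δ
    have h := my_trace_nonneg this
    rw [Matrix.conjTranspose_eq_transpose_of_trivial] at h
    rw [← Matrix.mul_assoc]
    exact h
  -- inverse of smul
  have hβ2 : (0:ℝ) < β ^ 2 := by positivity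
  haveI : Invertible (β^2 : ℝ) := invertibleOfNonzero (ne_of_gt hβ2)
  have hsmul_inv : (β ^ 2 • G)⁻¹ = (β ^ 2)⁻¹ • G⁻¹ := by
    rw [Matrix.inv_smul (A := G) (β ^ 2) (isUnit_iff_ne_zero.mpr hG.det_pos.ne'), invOf_eq_inv]
  rw [hHT, hsmul_inv]
  have e1 : ((Hᵀ * Δ)ᵀ * ((β ^ 2)⁻¹ • G⁻¹) * (Hᵀ * Δ)).trace
      = (β ^ 2)⁻¹ * (Δᵀ * (H * G⁻¹ * Hᴴ * Δ)).trace := by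
    simp only [Matrix.transpose_mul, Matrix.transpose_transpose, Matrix.mul_smul,
      Matrix.smul_mul, Matrix.trace_smul, smul_eq_mul,
      Matrix.conjTranspose_eq_transpose_of_trivial, Matrix.mul_assoc]
  have e2 : ((Θhat - Θstar)ᵀ * ((β ^ 2)⁻¹ • V) * (Θhat - Θstar)).trace
      = (β ^ 2)⁻¹ * (Δᵀ * (V * Δ)).trace := by
    rw [← hΔ]
    simp only [Matrix.mul_smul, Matrix.smul_mul, Matrix.trace_smul, smul_eq_mul,
      Matrix.mul_assoc]
  have h2 : (Δᵀ * (H * G⁻¹ * Hᴴ * Δ)).trace ≤ (Δᵀ * (V * Δ)).trace := by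
    rw [Matrix.sub_mul, Matrix.mul_sub, Matrix.trace_sub, sub_nonneg] at hTr
    exact hTr
  rw [e1]
  rw [e2] at hRLS
  have h3 : (β ^ 2)⁻¹ * (Δᵀ * (H * G⁻¹ * Hᴴ * Δ)).trace
      ≤ (β ^ 2)⁻¹ * (Δᵀ * (V * Δ)).trace :=
    mul_le_mul_of_nonneg_left h2 (by positivity)
  linarith
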